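/- (q-Binomial theorem) For complex numbers a, x, q with |x| < 1 and |q| < 1, one has ∑_{k=0}^∞ ((a;q)_k/(q;q)_k) x^k = (ax;q)_∞ / (x;q)_∞, where (a;q)_k = ∏_{j=0}^{k−1}(1 − a q^j) and (a;q)_∞ = ∏_{j=0}^∞ (1 − a q^j). -/

import Mathlib

open Finset Real Filter Topology

lemma exp_neg_le_one_sub {r t : ℝ} (hr : r < 1) (ht : 0 ≤ t) (htr : t ≤ r) :
    Real.exp (-(t / (1 - r))) ≤ 1 - t := by
  have h1 : (0:ℝ) < 1 - r := by linarith
  have h2 := Real.add_one_le_exp (t / (1 - r))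
  rw [Real.exp_neg]
  rw [inv_le_comm₀ (Real.exp_pos _) (by nlinarith)]
  calc (1 - t)⁻¹ ≤ 1 + t / (1 - r) := by
        rw [inv_le_iff_one_le_mul₀ (by nlinarith)]
        have : t * (1 - t) ≥ t * (1 - r) := by nlinarith
        have h3 : (1 + t/(1-r))*(1-t) = 1 + (t*(1-t) - t*(1-r))/(1-r) := by
          field_simp; ring
        rw [h3]
        have h4 : 0 ≤ (t*(1-t)-t*(1-r))/(1-r) := div_nonneg (by nlinarith) h1.le
        linarith
    _ ≤ Real.exp (t / (1 - r)) := by linarith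

lemma denom_lower {r : ℝ} (hr0 : 0 ≤ r) (hr : r < 1) (k : ℕ) :
    Real.exp (-(r / ((1 - r) * (1 - r)))) ≤ ∏ j ∈ range k, (1 - r ^ (j + 1)) := by
  have h1 : (0:ℝ) < 1 - r := by linarith
  have step : ∀ j : ℕ, Real.exp (-(r ^ (j+1) / (1 - r))) ≤ 1 - r ^ (j+1) := by
    intro j
    exact exp_neg_le_one_sub hr (pow_nonneg hr0 _)
      (by calc r ^ (j+1) ≤ r ^ 1 := pow_le_pow_of_le_one hr0 hr.le (by omega)
            _ = r := pow_one r)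
  calc Real.exp (-(r / ((1 - r) * (1 - r))))
      ≤ Real.exp (-((∑ j ∈ range k, r ^ (j+1)) / (1 - r))) := by
        apply Real.exp_le_exp.2
        rw [neg_le_neg_iff, div_le_div_iff₀ h1 (by positivity)]
        have hs : ∑ j ∈ range k, r ^ (j+1) ≤ r / (1 - r) := by
          have : ∑ j ∈ range k, r ^ (j+1) = r * ∑ j ∈ range k, r ^ j := by
            rw [Finset.mul_sum]; exact Finset.sum_congr rfl fun j _ => by ring
          rw [this]
          have hg : ∑ j ∈ range k, r ^ j ≤ (1 - r)⁻¹ := by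
            have := (summable_geometric_of_lt_one hr0 hr).sum_le_tsum (range k)
              (fun i _ => pow_nonneg hr0 i)
            rwa [tsum_geometric_of_lt_one hr0 hr] at this
          calc r * ∑ j ∈ range k, r ^ j ≤ r * (1 - r)⁻¹ := by
                exact mul_le_mul_of_nonneg_left hg hr0
            _ = r / (1 - r) := by rw [div_eq_mul_inv]
        calc (∑ j ∈ range k, r ^ (j+1)) * ((1-r)*(1-r)) ≤ (r / (1-r)) * ((1-r)*(1-r)) := by
              apply mul_le_mul_of_nonneg_right hs (by positivity)
          _ = r * (1 - r) := by field_simp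
    _ = ∏ j ∈ range k, Real.exp (-(r ^ (j+1) / (1 - r))) := by
        rw [← Real.exp_sum]
        congr 1
        rw [Finset.sum_div, ← Finset.sum_neg_distrib]
    _ ≤ ∏ j ∈ range k, (1 - r ^ (j+1)) := by
        apply Finset.prod_le_prod (fun j _ => (Real.exp_pos _).le) (fun j _ => step j)

lemma numer_upper {A r : ℝ} (hA : 0 ≤ A) (hr0 : 0 ≤ r) (hr : r < 1) (k : ℕ) :
    ∏ j ∈ range k, (1 + A * r ^ j) ≤ Real.exp (A / (1 - r)) := by
  calc ∏ j ∈ range k, (1 + A * r ^ j) ≤ ∏ j ∈ range k, Real.exp (A * r ^ j) := by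
        apply Finset.prod_le_prod (fun j _ => by positivity)
          (fun j _ => by have := Real.add_one_le_exp (A * r ^ j); linarith)
    _ = Real.exp (∑ j ∈ range k, A * r ^ j) := (Real.exp_sum _ _).symm
    _ ≤ Real.exp (A / (1 - r)) := by
        apply Real.exp_le_exp.2
        rw [← Finset.mul_sum, div_eq_mul_inv]
        apply mul_le_mul_of_nonneg_left _ hA
        have := (summable_geometric_of_lt_one hr0 hr).sum_le_tsum (range k)
          (fun i _ => pow_nonneg hr0 i)
        rwa [tsum_geometric_of_lt_one hr0 hr] at this

lemma cnorm_bound (a q : ℂ) (hq : ‖q‖ < 1) (k : ℕ) :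
    ‖(∏ j ∈ range k, (1 - a * q ^ j)) / (∏ j ∈ range k, (1 - q ^ (j + 1)))‖ ≤
      Real.exp (‖a‖ / (1 - ‖q‖)) * Real.exp (‖q‖ / ((1 - ‖q‖) * (1 - ‖q‖))) := by
  have hq0 : (0:ℝ) ≤ ‖q‖ := norm_nonneg q
  have hN : ‖∏ j ∈ range k, (1 - a * q ^ j)‖ ≤ Real.exp (‖a‖ / (1 - ‖q‖)) := by
    calc ‖∏ j ∈ range k, (1 - a * q ^ j)‖ ≤ ∏ j ∈ range k, ‖1 - a * q ^ j‖ :=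
          norm_prod_le _ _
      _ ≤ ∏ j ∈ range k, (1 + ‖a‖ * ‖q‖ ^ j) := by
          apply Finset.prod_le_prod (fun j _ => norm_nonneg _)
          intro j _
          calc ‖1 - a * q ^ j‖ ≤ ‖(1:ℂ)‖ + ‖a * q ^ j‖ := norm_sub_le _ _
            _ = 1 + ‖a‖ * ‖q‖ ^ j := by rw [norm_one, norm_mul, norm_pow]
      _ ≤ Real.exp (‖a‖ / (1 - ‖q‖)) := numer_upper (norm_nonneg a) hq0 hq k
  have hDlow : Real.exp (-(‖q‖ / ((1 - ‖q‖) * (1 - ‖q‖)))) ≤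
      ‖∏ j ∈ range k, (1 - q ^ (j + 1))‖ := by
    calc Real.exp (-(‖q‖ / ((1 - ‖q‖) * (1 - ‖q‖)))) ≤
        ∏ j ∈ range k, (1 - ‖q‖ ^ (j + 1)) := denom_lower hq0 hq k
      _ ≤ ∏ j ∈ range k, ‖1 - q ^ (j + 1)‖ := by
          apply Finset.prod_le_prod
          · intro j _
            have : ‖q‖ ^ (j+1) ≤ ‖q‖ ^ 1 := pow_le_pow_of_le_one hq0 hq.le (by omega)
            simp only [pow_one] at this
            linarith
          · intro j _
            calc 1 - ‖q‖ ^ (j+1) = ‖(1:ℂ)‖ - ‖q ^ (j+1)‖ := by rw [norm_one, norm_pow]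
              _ ≤ ‖1 - q ^ (j+1)‖ := norm_sub_norm_le _ _
      _ = ‖∏ j ∈ range k, (1 - q ^ (j + 1))‖ := by
          rw [norm_prod]
  rw [norm_div]
  calc ‖∏ j ∈ range k, (1 - a * q ^ j)‖ / ‖∏ j ∈ range k, (1 - q ^ (j + 1))‖ ≤
      Real.exp (‖a‖ / (1 - ‖q‖)) / Real.exp (-(‖q‖ / ((1 - ‖q‖) * (1 - ‖q‖)))) :=
        div_le_div₀ (Real.exp_pos _).le hN (Real.exp_pos _) hDlow
    _ = Real.exp (‖a‖ / (1 - ‖q‖)) * Real.exp (‖q‖ / ((1 - ‖q‖) * (1 - ‖q‖))) := by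
        rw [Real.exp_neg, div_inv_eq_mul]

noncomputable def qc (a q : ℂ) (k : ℕ) : ℂ :=
  (∏ j ∈ range k, (1 - a * q ^ j)) / (∏ j ∈ range k, (1 - q ^ (j + 1)))

lemma one_sub_ne {z : ℂ} (hz : ‖z‖ < 1) : (1 : ℂ) - z ≠ 0 := by
  intro h
  have : z = 1 := by linear_combination -h
  rw [this, norm_one] at hz
  exact lt_irrefl 1 hz

lemma qpow_lt (q : ℂ) (hq : ‖q‖ < 1) (m : ℕ) : ‖q ^ (m+1)‖ < 1 := by
  rw [norm_pow]
  calc ‖q‖ ^ (m+1) ≤ ‖q‖ ^ 1 := pow_le_pow_of_le_one (norm_nonneg q) hq.le (by omega)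
    _ = ‖q‖ := pow_one _
    _ < 1 := hq

lemma qcD_ne (q : ℂ) (hq : ‖q‖ < 1) (m : ℕ) :
    (∏ j ∈ range m, (1 - q ^ (j + 1))) ≠ 0 :=
  Finset.prod_ne_zero_iff.2 fun j _ => one_sub_ne (qpow_lt q hq j)

lemma qc_rec (a q : ℂ) (hq : ‖q‖ < 1) (k : ℕ) :
    qc a q (k+1) * (1 - q ^ (k+1)) = qc a q k * (1 - a * q ^ k) := by
  unfold qc
  rw [Finset.prod_range_succ, Finset.prod_range_succ]
  have h1 := qcD_ne q hq k
  have h2 := one_sub_ne (qpow_lt q hq k)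
  field_simp

lemma qc_summable (a q y : ℂ) (hq : ‖q‖ < 1) (hy : ‖y‖ < 1) :
    Summable fun k => qc a q k * y ^ k := by
  apply Summable.of_norm_bounded (g := fun k => (Real.exp (‖a‖ / (1 - ‖q‖)) * Real.exp (‖q‖ / ((1 - ‖q‖) * (1 - ‖q‖)))) * ‖y‖ ^ k)
    ((summable_geometric_of_lt_one (norm_nonneg y) hy).mul_left _)
  intro k
  rw [norm_mul, norm_pow]
  exact mul_le_mul_of_nonneg_right (cnorm_bound a q hq k) (pow_nonneg (norm_nonneg y) k)

set_option maxHeartbeats 1000000 in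
lemma qc_funeq (a q y : ℂ) (hq : ‖q‖ < 1) (hy : ‖y‖ < 1) :
    (1 - y) * ∑' k, qc a q k * y ^ k = (1 - a * y) * ∑' k, qc a q k * (q * y) ^ k := by
  have hqy : ‖q * y‖ < 1 := by
    rw [norm_mul]
    exact lt_of_le_of_lt (mul_le_of_le_one_left (norm_nonneg y) hq.le) hy
  have S1 := qc_summable a q y hq hy
  have S1' := qc_summable a q (q*y) hq hqy
  have S2 : Summable (fun k => y * (qc a q k * y ^ k)) := S1.mul_left y
  have S2' : Summable (fun k => (a*y) * (qc a q k * (q*y) ^ k)) := S1'.mul_left _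
  have S3 : Summable (fun k => qc a q (k+1) * y ^ (k+1)) := (summable_nat_add_iff 1).2 S1
  have S3' : Summable (fun k => qc a q (k+1) * (q*y) ^ (k+1)) := (summable_nat_add_iff 1).2 S1'
  have L : (1 - y) * ∑' k, qc a q k * y ^ k
      = qc a q 0 * y ^ 0 + ∑' k, (qc a q (k+1) * y ^ (k+1) - y * (qc a q k * y ^ k)) := by
    calc (1 - y) * ∑' k, qc a q k * y ^ k
        = (∑' k, qc a q k * y ^ k) - ∑' k, y * (qc a q k * y ^ k) := by
          rw [sub_mul, one_mul, tsum_mul_left]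
      _ = (qc a q 0 * y ^ 0 + ∑' k, qc a q (k+1) * y ^ (k+1)) -
            ∑' k, y * (qc a q k * y ^ k) := by rw [Summable.tsum_eq_zero_add S1]
      _ = qc a q 0 * y ^ 0 + ∑' k, (qc a q (k+1) * y ^ (k+1) - y * (qc a q k * y ^ k)) := by
          rw [Summable.tsum_sub S3 S2]; ring
  have R : (1 - a * y) * ∑' k, qc a q k * (q*y) ^ k
      = qc a q 0 * (q*y) ^ 0 +
        ∑' k, (qc a q (k+1) * (q*y) ^ (k+1) - (a*y) * (qc a q k * (q*y) ^ k)) := by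
    calc (1 - a * y) * ∑' k, qc a q k * (q*y) ^ k
        = (∑' k, qc a q k * (q*y) ^ k) - ∑' k, (a*y) * (qc a q k * (q*y) ^ k) := by
          rw [sub_mul, one_mul, tsum_mul_left]
      _ = (qc a q 0 * (q*y) ^ 0 + ∑' k, qc a q (k+1) * (q*y) ^ (k+1)) -
            ∑' k, (a*y) * (qc a q k * (q*y) ^ k) := by rw [Summable.tsum_eq_zero_add S1']
      _ = qc a q 0 * (q*y) ^ 0 +
            ∑' k, (qc a q (k+1) * (q*y) ^ (k+1) - (a*y) * (qc a q k * (q*y) ^ k)) := by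
          rw [Summable.tsum_sub S3' S2']; ring
  rw [L, R, pow_zero, pow_zero]
  congr 1
  apply tsum_congr
  intro k
  linear_combination (y ^ (k+1)) * qc_rec a q hq k

lemma log_summable (c q : ℂ) (hq : ‖q‖ < 1) :
    Summable fun j => Complex.log (1 - c * q ^ j) := by
  have h0 : Tendsto (fun n : ℕ => ‖c‖ * ‖q‖ ^ n) atTop (𝓝 0) := by
    simpa using (tendsto_pow_atTop_nhds_zero_of_lt_one (norm_nonneg q) hq).const_mul ‖c‖
  obtain ⟨N, hN⟩ := (Filter.eventually_atTop.1 (h0.eventually_le_const (by norm_num :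
    (0:ℝ) < 1/2)))
  rw [← summable_nat_add_iff N]
  apply Summable.of_norm_bounded (g := fun j => 3/2 * (‖c‖ * ‖q‖ ^ N) * ‖q‖ ^ j)
    (((summable_geometric_of_lt_one (norm_nonneg q) hq).mul_left _))
  intro j
  have hsmall : ‖-(c * q ^ (j + N))‖ ≤ 1/2 := by
    rw [norm_neg, norm_mul, norm_pow, pow_add]
    calc ‖c‖ * (‖q‖ ^ j * ‖q‖ ^ N) = (‖c‖ * ‖q‖ ^ N) * ‖q‖ ^ j := by ring
      _ ≤ (‖c‖ * ‖q‖ ^ N) * 1 := by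
          apply mul_le_mul_of_nonneg_left (pow_le_one₀ (norm_nonneg q) hq.le)
            (by positivity)
      _ ≤ 1/2 := by have := hN N le_rfl; nlinarith [hN N le_rfl]
  have := Complex.norm_log_one_add_half_le_self hsmall
  rw [show (1 : ℂ) + -(c * q ^ (j + N)) = 1 - c * q ^ (j + N) by ring] at this
  calc ‖Complex.log (1 - c * q ^ (j + N))‖ ≤ 3/2 * ‖-(c * q ^ (j + N))‖ := this
    _ = 3/2 * (‖c‖ * ‖q‖ ^ N) * ‖q‖ ^ j := by
        rw [norm_neg, norm_mul, norm_pow, pow_add]; ring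

lemma multipliable_of_ne (c q : ℂ) (hq : ‖q‖ < 1) (hne : ∀ j : ℕ, 1 - c * q ^ j ≠ 0) :
    Multipliable (fun j : ℕ => 1 - c * q ^ j) ∧
      (∏' j : ℕ, (1 - c * q ^ j)) ≠ 0 := by
  have hm : Multipliable (fun j : ℕ => 1 - c * q ^ j) :=
    Complex.multipliable_of_summable_log (log_summable c q hq)
  refine ⟨hm, ?_⟩
  have := Complex.cexp_tsum_eq_tprod (f := fun j : ℕ => 1 - c * q ^ j) hne (log_summable c q hq)
  rw [← this]
  exact Complex.exp_ne_zero _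

lemma tendsto_prod_general (c q : ℂ) (hq : ‖q‖ < 1) :
    Tendsto (fun n => ∏ j ∈ range n, (1 - c * q ^ j)) atTop
      (𝓝 (∏' j : ℕ, (1 - c * q ^ j))) := by
  by_cases hne : ∀ j : ℕ, 1 - c * q ^ j ≠ 0
  · exact (multipliable_of_ne c q hq hne).1.hasProd.tendsto_prod_nat
  · push_neg at hne
    obtain ⟨j0, hj0⟩ := hne
    have hp : HasProd (fun j : ℕ => 1 - c * q ^ j) 0 := by
      rw [HasProd]
      apply Tendsto.congr' _ tendsto_const_nhds
      rw [Filter.EventuallyEq, SummationFilter.unconditional_filter, Filter.eventually_atTop]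
      exact ⟨{j0}, fun s hs => (Finset.prod_eq_zero (hs (Finset.mem_singleton_self j0)) hj0).symm⟩
    rw [hp.tprod_eq]
    exact hp.tendsto_prod_nat

set_option maxHeartbeats 1000000 in
lemma qc_iter (a x q : ℂ) (hx : ‖x‖ < 1) (hq : ‖q‖ < 1) (n : ℕ) :
    (∏ j ∈ range n, (1 - x * q ^ j)) * ∑' k, qc a q k * x ^ k
      = (∏ j ∈ range n, (1 - a * x * q ^ j)) * ∑' k, qc a q k * (q ^ n * x) ^ k := by
  induction n with
  | zero => simp
  | succ n ih =>
    have hy : ‖q ^ n * x‖ < 1 := by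
      rw [norm_mul, norm_pow]
      calc ‖q‖ ^ n * ‖x‖ ≤ 1 * ‖x‖ :=
            mul_le_mul_of_nonneg_right (pow_le_one₀ (norm_nonneg q) hq.le) (norm_nonneg x)
        _ = ‖x‖ := one_mul _
        _ < 1 := hx
    have hfe := qc_funeq a q (q ^ n * x) hq hy
    have e : q * (q ^ n * x) = q ^ (n+1) * x := by ring
    rw [e] at hfe
    rw [Finset.prod_range_succ, Finset.prod_range_succ]
    calc (∏ j ∈ range n, (1 - x * q ^ j)) * (1 - x * q ^ n) * ∑' k, qc a q k * x ^ k
        = (1 - x * q ^ n) * ((∏ j ∈ range n, (1 - x * q ^ j)) * ∑' k, qc a q k * x ^ k) := by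
          ring
      _ = (1 - x * q ^ n) *
            ((∏ j ∈ range n, (1 - a * x * q ^ j)) * ∑' k, qc a q k * (q ^ n * x) ^ k) := by
          rw [ih]
      _ = (∏ j ∈ range n, (1 - a * x * q ^ j)) *
            ((1 - q ^ n * x) * ∑' k, qc a q k * (q ^ n * x) ^ k) := by ring
      _ = (∏ j ∈ range n, (1 - a * x * q ^ j)) *
            ((1 - a * (q ^ n * x)) * ∑' k, qc a q k * (q ^ (n+1) * x) ^ k) := by rw [hfe]
      _ = (∏ j ∈ range n, (1 - a * x * q ^ j)) * (1 - a * x * q ^ n) *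
            ∑' k, qc a q k * (q ^ (n+1) * x) ^ k := by ring

set_option maxHeartbeats 1000000 in
lemma qc_tail (a q y : ℂ) (hq : ‖q‖ < 1) (hy : ‖y‖ < 1) :
    ‖(∑' k, qc a q k * y ^ k) - 1‖ ≤
      (Real.exp (‖a‖ / (1 - ‖q‖)) * Real.exp (‖q‖ / ((1 - ‖q‖) * (1 - ‖q‖)))) *
        (1 - ‖y‖)⁻¹ * ‖y‖ := by
  set C := Real.exp (‖a‖ / (1 - ‖q‖)) * Real.exp (‖q‖ / ((1 - ‖q‖) * (1 - ‖q‖))) with hC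
  have hC0 : 0 ≤ C := by positivity
  have S1 := qc_summable a q y hq hy
  have hqc0 : qc a q 0 * y ^ 0 = 1 := by simp [qc]
  have hb : ∀ k : ℕ, ‖qc a q (k+1) * y ^ (k+1)‖ ≤ C * ‖y‖ ^ (k + 1) := by
    intro k
    rw [norm_mul, norm_pow]
    exact mul_le_mul_of_nonneg_right (cnorm_bound a q hq (k+1))
      (pow_nonneg (norm_nonneg y) _)
  have Sg : Summable (fun k : ℕ => C * ‖y‖ ^ (k + 1)) := by
    have := ((summable_geometric_of_lt_one (norm_nonneg y) hy).mul_left (C * ‖y‖))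
    apply this.congr
    intro k; rw [pow_succ]; ring
  have S3 : Summable (fun k => qc a q (k+1) * y ^ (k+1)) := (summable_nat_add_iff 1).2 S1
  have heq : (∑' k, qc a q k * y ^ k) - 1 = ∑' k, qc a q (k+1) * y ^ (k+1) := by
    rw [Summable.tsum_eq_zero_add S1, hqc0]; ring
  rw [heq]
  calc ‖∑' k, qc a q (k+1) * y ^ (k+1)‖ ≤ ∑' k, ‖qc a q (k+1) * y ^ (k+1)‖ :=
        norm_tsum_le_tsum_norm (summable_norm_iff.2 S3)
    _ ≤ ∑' k : ℕ, C * ‖y‖ ^ (k + 1) :=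
        (summable_norm_iff.2 S3).tsum_le_tsum hb Sg
    _ = (C * ‖y‖) * ∑' k : ℕ, ‖y‖ ^ k := by
        rw [← tsum_mul_left]
        apply tsum_congr; intro k; rw [pow_succ]; ring
    _ = C * (1 - ‖y‖)⁻¹ * ‖y‖ := by
        rw [tsum_geometric_of_lt_one (norm_nonneg y) hy]; ring

set_option maxHeartbeats 1000000 in
theorem stmt8 (a x q : ℂ) (hx : ‖x‖ < 1) (hq : ‖q‖ < 1) :
    ∑' k : ℕ, (∏ j ∈ Finset.range k, (1 - a * q ^ j)) /
        (∏ j ∈ Finset.range k, (1 - q ^ (j + 1))) * x ^ k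
      = (∏' j : ℕ, (1 - a * x * q ^ j)) / (∏' j : ℕ, (1 - x * q ^ j)) := by
  have hLHS : (∑' k : ℕ, (∏ j ∈ Finset.range k, (1 - a * q ^ j)) /
        (∏ j ∈ Finset.range k, (1 - q ^ (j + 1))) * x ^ k) = ∑' k, qc a q k * x ^ k := rfl
  rw [hLHS]
  set C := Real.exp (‖a‖ / (1 - ‖q‖)) * Real.exp (‖q‖ / ((1 - ‖q‖) * (1 - ‖q‖))) with hCdef
  set S := ∑' k, qc a q k * x ^ k with hS
  have hxq : ∀ j : ℕ, ‖x * q ^ j‖ < 1 := by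
    intro j
    rw [norm_mul, norm_pow]
    calc ‖x‖ * ‖q‖ ^ j ≤ ‖x‖ * 1 :=
          mul_le_mul_of_nonneg_left (pow_le_one₀ (norm_nonneg q) hq.le) (norm_nonneg x)
      _ = ‖x‖ := mul_one _
      _ < 1 := hx
  have h1 : Tendsto (fun n => ∏ j ∈ range n, (1 - x * q ^ j)) atTop
      (𝓝 (∏' j : ℕ, (1 - x * q ^ j))) := tendsto_prod_general x q hq
  have h2 : Tendsto (fun n => ∏ j ∈ range n, (1 - a * x * q ^ j)) atTop
      (𝓝 (∏' j : ℕ, (1 - a * x * q ^ j))) := by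
    have := tendsto_prod_general (a * x) q hq
    simpa only [mul_assoc] using this
  have hyb : ∀ n : ℕ, ‖q ^ n * x‖ < 1 := fun n => by rw [mul_comm]; exact hxq n
  have h3 : Tendsto (fun n => ∑' k, qc a q k * (q ^ n * x) ^ k) atTop (𝓝 1) := by
    rw [tendsto_iff_norm_sub_tendsto_zero]
    have key : ∀ n : ℕ, ‖(∑' k, qc a q k * (q ^ n * x) ^ k) - 1‖ ≤
        (C * (1 - ‖x‖)⁻¹ * ‖x‖) * ‖q‖ ^ n := by
      intro n
      have hy := hyb n
      have := qc_tail a q (q ^ n * x) hq hy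
      rw [← hCdef] at this
      have hynorm : ‖q ^ n * x‖ = ‖q‖ ^ n * ‖x‖ := by rw [norm_mul, norm_pow]
      have hyx : ‖q ^ n * x‖ ≤ ‖x‖ := by
        rw [hynorm]
        calc ‖q‖ ^ n * ‖x‖ ≤ 1 * ‖x‖ :=
              mul_le_mul_of_nonneg_right (pow_le_one₀ (norm_nonneg q) hq.le) (norm_nonneg x)
          _ = ‖x‖ := one_mul _
      have hinv : (1 - ‖q ^ n * x‖)⁻¹ ≤ (1 - ‖x‖)⁻¹ := by
        apply inv_anti₀ (by linarith) (by linarith)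
      calc ‖(∑' k, qc a q k * (q ^ n * x) ^ k) - 1‖
          ≤ C * (1 - ‖q ^ n * x‖)⁻¹ * ‖q ^ n * x‖ := this
        _ ≤ C * (1 - ‖x‖)⁻¹ * (‖q‖ ^ n * ‖x‖) := by
            rw [← hynorm]
            apply mul_le_mul_of_nonneg_right _ (norm_nonneg _)
            exact mul_le_mul_of_nonneg_left hinv (by positivity)
        _ = (C * (1 - ‖x‖)⁻¹ * ‖x‖) * ‖q‖ ^ n := by ring
    have hb : Tendsto (fun n : ℕ => (C * (1 - ‖x‖)⁻¹ * ‖x‖) * ‖q‖ ^ n) atTop (𝓝 0) := by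
      simpa using (tendsto_pow_atTop_nhds_zero_of_lt_one (norm_nonneg q) hq).const_mul
        (C * (1 - ‖x‖)⁻¹ * ‖x‖)
    exact squeeze_zero (fun n => norm_nonneg _) key hb
  have heq : ∀ n : ℕ, (∏ j ∈ range n, (1 - x * q ^ j)) * S
      = (∏ j ∈ range n, (1 - a * x * q ^ j)) * ∑' k, qc a q k * (q ^ n * x) ^ k :=
    fun n => qc_iter a x q hx hq n
  have ht1 : Tendsto (fun n => (∏ j ∈ range n, (1 - x * q ^ j)) * S) atTop
      (𝓝 ((∏' j : ℕ, (1 - x * q ^ j)) * S)) := h1.mul_const S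
  have ht2 : Tendsto (fun n => (∏ j ∈ range n, (1 - x * q ^ j)) * S) atTop
      (𝓝 ((∏' j : ℕ, (1 - a * x * q ^ j)) * 1)) := by
    apply Tendsto.congr _ (h2.mul h3)
    intro n
    exact (heq n).symm
  have hfin : (∏' j : ℕ, (1 - x * q ^ j)) * S = (∏' j : ℕ, (1 - a * x * q ^ j)) * 1 :=
    tendsto_nhds_unique ht1 ht2
  have hTx : (∏' j : ℕ, (1 - x * q ^ j)) ≠ 0 :=
    (multipliable_of_ne x q hq (fun j => one_sub_ne (hxq j))).2
  rw [eq_div_iff hTx]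
  linear_combination hfin
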